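/- Let A be a finite-dimensional nilpotent complex Leibniz algebra with dim(A/A²) = 2 and dim(A²/A³) = 1, and suppose the associated graded algebra gr(A) is a Lie algebra, i.e. [a,b] + [b,a] ∈ A^{i+j+1} for all i, j ≥ 1, a ∈ A^i, b ∈ A^j. Then there exist elements x₁, x₂ ∈ A whose images form a basis of A/A² and an element x₃ ∈ A² whose image spans A²/A³, such that [x₁, x₁] ∈ A³, [x₂, x₂] ∈ A³, [x₂, x₁] − x₃ ∈ A³, and [x₁, x₂] + x₃ ∈ A³. -/

import Mathlib

/-- A complex Leibniz algebra structure on a vector space `V`: a bilinear bracket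
satisfying the Leibniz identity `[x,[y,z]] = [[x,y],z] − [[x,z],y]`. -/
structure LeibnizAlg (V : Type*) [AddCommGroup V] [Module ℂ V] where
  br : V →ₗ[ℂ] V →ₗ[ℂ] V
  leibniz : ∀ x y z : V, br x (br y z) = br (br x y) z - br (br x z) y

namespace LeibnizAlg

variable {V : Type*} [AddCommGroup V] [Module ℂ V]

/-- The span of all products `[u,v]` with `u ∈ S`, `v ∈ T`. -/
def prodSpan (A : LeibnizAlg V) (S T : Submodule ℂ V) : Submodule ℂ V :=
  Submodule.span ℂ {z : V | ∃ u ∈ S, ∃ v ∈ T, z = A.br u v}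

/-- `A.lcs k` is the `(k+1)`-st term `A^{k+1}` of the descending central series:
`A¹ = A`, `A^{k+1} = [A^k, A]`. -/
def lcs (A : LeibnizAlg V) : ℕ → Submodule ℂ V
  | 0 => ⊤
  | k + 1 => A.prodSpan (lcs A k) ⊤

end LeibnizAlg

section Aux

variable {V : Type*} [AddCommGroup V] [Module ℂ V]

lemma br_mem_lcs1 (A : LeibnizAlg V) (u v : V) : A.br u v ∈ A.lcs 1 :=
  Submodule.subset_span ⟨u, Submodule.mem_top, v, Submodule.mem_top, rfl⟩

lemma br_mem_lcs2_left (A : LeibnizAlg V) {u : V} (hu : u ∈ A.lcs 1) (v : V) :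
    A.br u v ∈ A.lcs 2 :=
  Submodule.subset_span ⟨u, hu, v, Submodule.mem_top, rfl⟩

lemma lcs2_le_lcs1 (A : LeibnizAlg V) : A.lcs 2 ≤ A.lcs 1 := by
  apply Submodule.span_le.2
  rintro z ⟨u, hu, v, hv, rfl⟩
  exact br_mem_lcs1 A u v

lemma lcs3_le_lcs2 (A : LeibnizAlg V) : A.lcs 3 ≤ A.lcs 2 := by
  apply Submodule.span_le.2
  rintro z ⟨u, hu, v, hv, rfl⟩
  exact br_mem_lcs2_left A (lcs2_le_lcs1 A hu) v

end Aux

/-- A finite-dimensional nilpotent complex Leibniz algebra with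
`dim(A/A²) = 2`, `dim(A²/A³) = 1` and Lie associated graded algebra admits `x₁, x₂`
whose images form a basis of `A/A²` and `x₃ ∈ A²` whose image spans `A²/A³`, with
`[x₁,x₁] ∈ A³`, `[x₂,x₂] ∈ A³`, `[x₂,x₁] − x₃ ∈ A³`, `[x₁,x₂] + x₃ ∈ A³`.
(Here `A.lcs k = A^{k+1}`.) -/
theorem statement16 {V : Type*} [AddCommGroup V] [Module ℂ V] [FiniteDimensional ℂ V]
    (A : LeibnizAlg V)
    (hnil : ∃ s, A.lcs s = ⊥)
    (hd1 : Module.finrank ℂ (V ⧸ A.lcs 1) = 2)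
    (hd2 : Module.finrank ℂ (A.lcs 1 ⧸ (A.lcs 2).comap (A.lcs 1).subtype) = 1)
    (hlie : ∀ i j : ℕ, ∀ a ∈ A.lcs i, ∀ b ∈ A.lcs j,
      A.br a b + A.br b a ∈ A.lcs (i + j + 2)) :
    ∃ x₁ x₂ x₃ : V,
      LinearIndependent ℂ ![(A.lcs 1).mkQ x₁, (A.lcs 1).mkQ x₂] ∧
      Submodule.span ℂ {(A.lcs 1).mkQ x₁, (A.lcs 1).mkQ x₂} = ⊤ ∧
      x₃ ∈ A.lcs 1 ∧
      (∀ w ∈ A.lcs 1, ∃ c : ℂ, w - c • x₃ ∈ A.lcs 2) ∧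
      A.br x₁ x₁ ∈ A.lcs 2 ∧
      A.br x₂ x₂ ∈ A.lcs 2 ∧
      A.br x₂ x₁ - x₃ ∈ A.lcs 2 ∧
      A.br x₁ x₂ + x₃ ∈ A.lcs 2 := by
  have hlie2 : ∀ u v : V, A.br u v + A.br v u ∈ A.lcs 2 := fun u v =>
    hlie 0 0 u Submodule.mem_top v Submodule.mem_top
  have hright : ∀ (u : V) {v : V}, v ∈ A.lcs 1 → A.br u v ∈ A.lcs 2 := by
    intro u v hv
    have h1 : A.br u v + A.br v u ∈ A.lcs 3 := hlie 0 1 u Submodule.mem_top v hv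
    have h2 : A.br v u ∈ A.lcs 2 := br_mem_lcs2_left A hv u
    have h3 := (A.lcs 2).sub_mem (lcs3_le_lcs2 A h1) h2
    simpa using h3
  have hsq : ∀ u : V, A.br u u ∈ A.lcs 2 := by
    intro u
    have h2 := (A.lcs 2).smul_mem ((2:ℂ)⁻¹) (hlie2 u u)
    rwa [← two_smul ℂ, smul_smul, inv_mul_cancel₀ (two_ne_zero), one_smul] at h2
  set W := A.lcs 1 with hW
  let b : Module.Basis (Fin 2) ℂ (V ⧸ W) := Module.finBasisOfFinrankEq ℂ _ hd1
  obtain ⟨x₁, hx₁⟩ := W.mkQ_surjective (b 0)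
  obtain ⟨x₂, hx₂⟩ := W.mkQ_surjective (b 1)
  have hbfun : ![W.mkQ x₁, W.mkQ x₂] = ⇑b := by
    funext i
    fin_cases i
    · simpa using hx₁
    · simpa using hx₂
  have hli : LinearIndependent ℂ ![W.mkQ x₁, W.mkQ x₂] := by
    rw [hbfun]; exact b.linearIndependent
  have hsp : Submodule.span ℂ {W.mkQ x₁, W.mkQ x₂} = ⊤ := by
    have hset : ({W.mkQ x₁, W.mkQ x₂} : Set (V ⧸ W)) = Set.range ⇑b := by
      ext y
      constructor
      · rintro (rfl | rfl)
        · exact ⟨0, hx₁.symm ▸ rfl⟩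
        · exact ⟨1, hx₂.symm ▸ rfl⟩
      · rintro ⟨i, rfl⟩
        fin_cases i
        · left; exact hx₁.symm
        · right; exact hx₂.symm
    rw [hset, b.span_eq]
  have hdecomp : ∀ u : V, ∃ a c : ℂ, u - a • x₁ - c • x₂ ∈ W := by
    intro u
    have hu : W.mkQ u ∈ Submodule.span ℂ {W.mkQ x₁, W.mkQ x₂} :=
      hsp ▸ Submodule.mem_top
    obtain ⟨a, c, hac⟩ := Submodule.mem_span_pair.1 hu
    refine ⟨a, c, ?_⟩
    have h0 : W.mkQ (u - a • x₁ - c • x₂) = 0 := by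
      simp only [map_sub, map_smul]
      rw [← hac]; abel
    exact (Submodule.Quotient.mk_eq_zero W).1 h0
  refine ⟨x₁, x₂, A.br x₂ x₁, hli, hsp, br_mem_lcs1 A x₂ x₁, ?_, hsq x₁, hsq x₂,
    by simpa using (A.lcs 2).zero_mem, hlie2 x₁ x₂⟩
  -- it remains to show the image of x₃ = [x₂,x₁] spans W / A³
  have hx3 : A.br x₂ x₁ ∉ A.lcs 2 := by
    intro hx3
    have h12 : A.br x₁ x₂ ∈ A.lcs 2 := by
      have := (A.lcs 2).sub_mem (hlie2 x₁ x₂) hx3; simpa using this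
    have hWle : W ≤ A.lcs 2 := by
      apply Submodule.span_le.2
      rintro z ⟨u, -, v, -, rfl⟩
      obtain ⟨a, c, hu'⟩ := hdecomp u
      obtain ⟨d, e, hv'⟩ := hdecomp v
      set u' := u - a • x₁ - c • x₂ with hu'def
      set v' := v - d • x₁ - e • x₂ with hv'def
      have hu_eq : u = a • x₁ + c • x₂ + u' := by rw [hu'def]; abel
      have hv_eq : v = d • x₁ + e • x₂ + v' := by rw [hv'def]; abel
      have hu1 : A.br u x₁ ∈ A.lcs 2 := by
        rw [hu_eq]
        simp only [map_add, map_smul, LinearMap.add_apply, LinearMap.smul_apply]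
        exact Submodule.add_mem _ (Submodule.add_mem _
          (Submodule.smul_mem _ _ (hsq x₁)) (Submodule.smul_mem _ _ hx3))
          (br_mem_lcs2_left A hu' x₁)
      have hu2 : A.br u x₂ ∈ A.lcs 2 := by
        rw [hu_eq]
        simp only [map_add, map_smul, LinearMap.add_apply, LinearMap.smul_apply]
        exact Submodule.add_mem _ (Submodule.add_mem _
          (Submodule.smul_mem _ _ h12) (Submodule.smul_mem _ _ (hsq x₂)))
          (br_mem_lcs2_left A hu' x₂)
      rw [hv_eq]
      simp only [map_add, map_smul]
      exact Submodule.add_mem _ (Submodule.add_mem _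
        (Submodule.smul_mem _ _ hu1) (Submodule.smul_mem _ _ hu2))
        (hright u hv')
    have hN : (A.lcs 2).comap W.subtype = ⊤ := by
      ext w
      simp only [Submodule.mem_comap, Submodule.mem_top, iff_true]
      exact hWle w.2
    rw [hN] at hd2
    have hsub : Subsingleton (W ⧸ (⊤ : Submodule ℂ W)) :=
      Submodule.Quotient.subsingleton_iff.2 rfl
    have := Module.finrank_zero_of_subsingleton (M := W ⧸ (⊤ : Submodule ℂ W)) (R := ℂ)
    omega
  set N := (A.lcs 2).comap W.subtype with hN
  set y₃ : W := ⟨A.br x₂ x₁, br_mem_lcs1 A x₂ x₁⟩ with hy₃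
  have hq0 : N.mkQ y₃ ≠ 0 := by
    intro h0
    exact hx3 ((Submodule.Quotient.mk_eq_zero N).1 h0)
  have hqtop : Submodule.span ℂ {N.mkQ y₃} = ⊤ := by
    apply Submodule.eq_top_of_finrank_eq
    rw [finrank_span_singleton hq0, hd2]
  intro w hw
  have hmem : N.mkQ ⟨w, hw⟩ ∈ Submodule.span ℂ {N.mkQ y₃} :=
    hqtop ▸ Submodule.mem_top
  obtain ⟨c, hc⟩ := Submodule.mem_span_singleton.1 hmem
  refine ⟨c, ?_⟩
  have h0 : N.mkQ ((⟨w, hw⟩ : W) - c • y₃) = 0 := by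
    rw [map_sub, map_smul, ← hc]; abel
  have hmem2 := (Submodule.Quotient.mk_eq_zero N).1 h0
  simpa [hN, Submodule.mem_comap, hy₃] using hmem2
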